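/- Let f : ℝ^d → ℝ be continuously differentiable with f(x) ≥ 0 for all x, and suppose f satisfies the Polyak–Łojasiewicz condition ‖∇f(x)‖₂² ≥ μ f(x) for all x, with μ > 0. Let x : [0,∞) → ℝ^d be differentiable with ẋ_i(t) = −sign(∂_i f(x(t))) for every coordinate i and every t ≥ 0 (continuous-time signGD), started from x(0) = x₀. Then for every t with 0 ≤ t ≤ 2√(f(x₀))/√μ, one has f(x(t)) ≤ (√(f(x₀)) − (√μ/2) t)². -/

import Mathlib

private lemma mul_sign_eq_abs (r : ℝ) : r * Real.sign r = |r| := by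
  rcases lt_trichotomy r 0 with h|h|h
  · rw [Real.sign_of_neg h, abs_of_neg h]; ring
  · simp [h]
  · rw [Real.sign_of_pos h, abs_of_pos h]; ring

private lemma euclid_norm_le_sum_abs {d : ℕ} (z : EuclideanSpace ℝ (Fin d)) :
    ‖z‖ ≤ ∑ i, |z i| := by
  rw [EuclideanSpace.norm_eq]
  rw [show (∑ i, |z i|) = Real.sqrt ((∑ i, |z i|)^2) from (Real.sqrt_sq (by positivity)).symm]
  apply Real.sqrt_le_sqrt
  simpa [Real.norm_eq_abs, sq_abs] using
    Finset.sum_sq_le_sq_sum_of_nonneg (f := fun i => |z i|) (fun i _ => abs_nonneg _)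

private lemma fderiv_apply_eq_sum {d : ℕ} (f : EuclideanSpace ℝ (Fin d) → ℝ)
    (z v : EuclideanSpace ℝ (Fin d)) :
    (fderiv ℝ f z) v = ∑ i, gradient f z i * v i := by
  rw [show fderiv ℝ f z = (InnerProductSpace.toDual ℝ _)
      ((InnerProductSpace.toDual ℝ _).symm (fderiv ℝ f z)) from
      ((InnerProductSpace.toDual ℝ _).apply_symm_apply _).symm]
  rw [InnerProductSpace.toDual_apply_apply, ← gradient, PiLp.inner_apply]
  simp [RCLike.inner_apply, mul_comm]

theorem signGD_fast_convergence
    (d : ℕ) (f : EuclideanSpace ℝ (Fin d) → ℝ)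
    (hf : ContDiff ℝ 1 f)
    (hfnonneg : ∀ z, 0 ≤ f z)
    (μ : ℝ) (hμ : 0 < μ)
    (hPL : ∀ z, μ * f z ≤ ‖gradient f z‖ ^ 2)
    (x₀ : EuclideanSpace ℝ (Fin d))
    (x : ℝ → EuclideanSpace ℝ (Fin d))
    (hx0 : x 0 = x₀)
    (hx : ∀ t : ℝ, 0 ≤ t → ∀ i,
      HasDerivAt (fun s => x s i) (-Real.sign (gradient f (x t) i)) t) :
    ∀ t : ℝ, 0 ≤ t → t ≤ 2 * Real.sqrt (f x₀) / Real.sqrt μ →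
      f (x t) ≤ (Real.sqrt (f x₀) - Real.sqrt μ / 2 * t) ^ 2 := by
  have hfd : Differentiable ℝ f := hf.differentiable one_ne_zero
  set c : ℝ := Real.sqrt μ / 2 with hc
  set a : ℝ := Real.sqrt (f x₀) with ha
  -- derivative of g = f ∘ x
  have key : ∀ s : ℝ, 0 ≤ s →
      HasDerivAt (fun u => f (x u)) (-∑ i, |gradient f (x s) i|) s := by
    intro s hs
    have hxd : HasDerivAt x (WithLp.toLp 2 (fun i => -Real.sign (gradient f (x s) i))) s := by
      have h1 : HasDerivAt (fun u => (EuclideanSpace.equiv (Fin d) ℝ) (x u))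
          (fun i => -Real.sign (gradient f (x s) i)) s := hasDerivAt_pi.2 (hx s hs)
      exact
        ((EuclideanSpace.equiv (Fin d) ℝ).symm.toContinuousLinearMap.hasFDerivAt).comp_hasDerivAt
          s h1
    have hchain := ((hfd (x s)).hasFDerivAt).comp_hasDerivAt s hxd
    refine hchain.congr_deriv ?_
    rw [fderiv_apply_eq_sum]
    rw [← Finset.sum_neg_distrib]
    refine Finset.sum_congr rfl fun i _ => ?_
    have := mul_sign_eq_abs (gradient f (x s) i)
    simp only [PiLp.toLp_apply]
    nlinarith [this]
  -- derivative bound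
  have hderiv_le : ∀ s : ℝ, 0 ≤ s →
      (-∑ i, |gradient f (x s) i|) ≤ -(Real.sqrt μ * Real.sqrt (f (x s))) := by
    intro s hs
    have h1 : ‖gradient f (x s)‖ ≤ ∑ i, |gradient f (x s) i| := euclid_norm_le_sum_abs _
    have h2 : Real.sqrt μ * Real.sqrt (f (x s)) ≤ ‖gradient f (x s)‖ := by
      rw [← Real.sqrt_mul hμ.le]
      calc Real.sqrt (μ * f (x s)) ≤ Real.sqrt (‖gradient f (x s)‖ ^ 2) :=
            Real.sqrt_le_sqrt (hPL _)
        _ = ‖gradient f (x s)‖ := Real.sqrt_sq (norm_nonneg _)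
    linarith
  intro t ht hT
  -- reduce to ε-perturbed bound
  have main : ∀ ε : ℝ, 0 < ε → f (x t) ≤ (a - c * t) ^ 2 + ε * (t + 1) := by
    intro ε hε
    set B : ℝ → ℝ := fun s => (a - c * s) ^ 2 + ε * (s + 1) with hB
    set B' : ℝ → ℝ := fun s => 2 * (a - c * s) * (-c) + ε with hB'
    have hBd : ∀ s : ℝ, HasDerivAt B (B' s) s := by
      intro s
      have h1 : HasDerivAt (fun u : ℝ => a - c * u) (-c) s := by
        simpa using ((hasDerivAt_id s).const_mul c).const_sub a
      have h2 : HasDerivAt (fun u : ℝ => (a - c * u) ^ 2) (2 * (a - c * s) * (-c)) s := by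
        refine (h1.fun_pow' 2).congr_deriv ?_
        norm_num [Finset.sum_range_succ] <;> ring
      have h3 : HasDerivAt (fun u : ℝ => ε * (u + 1)) ε s := by
        simpa using ((hasDerivAt_id s).add_const 1).const_mul ε
      have := h2.add h3
      exact this
    have hgc : ContinuousOn (fun u => f (x u)) (Set.Icc 0 t) := fun s hs =>
      ((key s hs.1).continuousAt).continuousWithinAt
    have hres := image_le_of_deriv_right_lt_deriv_boundary
      (f := fun u => f (x u)) (f' := fun s => -∑ i, |gradient f (x s) i|)
      (a := 0) (b := t) (B := B) (B' := B') hgc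
      (fun s hs => (key s hs.1).hasDerivWithinAt)
      (by
        simp only [hB, hx0]
        have : f x₀ = a ^ 2 := (Real.sq_sqrt (hfnonneg x₀)).symm
        nlinarith)
      hBd
      (by
        intro s hs heq
        have h1 := hderiv_le s hs.1
        have h2 : a - c * s ≤ Real.sqrt (f (x s)) := by
          have heq' : f (x s) = B s := heq
          have hle : (a - c * s) ^ 2 ≤ f (x s) := by
            rw [heq']; simp only [hB]
            nlinarith [mul_pos hε (by linarith [hs.1] : (0:ℝ) < s + 1)]
          calc a - c * s ≤ |a - c * s| := le_abs_self _
            _ = Real.sqrt ((a - c * s) ^ 2) := (Real.sqrt_sq_eq_abs _).symm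
            _ ≤ Real.sqrt (f (x s)) := Real.sqrt_le_sqrt hle
        have h3 : Real.sqrt μ * (a - c * s) ≤ Real.sqrt μ * Real.sqrt (f (x s)) :=
          mul_le_mul_of_nonneg_left h2 (Real.sqrt_nonneg μ)
        have hc2 : 2 * c = Real.sqrt μ := by rw [hc]; ring
        have h4 : Real.sqrt μ * (a - c * s) = -(2 * (a - c * s) * (-c)) := by
          rw [← hc2]; ring
        simp only [hB']
        linarith)
    have := hres (Set.mem_Icc.2 ⟨ht, le_refl t⟩)
    simpa [hB] using this
  -- let ε → 0
  have : f (x t) ≤ (a - c * t) ^ 2 := by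
    refine le_of_forall_pos_le_add fun δ hδ => ?_
    have ht1 : (0:ℝ) < t + 1 := by linarith
    have := main (δ / (t + 1)) (div_pos hδ ht1)
    rwa [div_mul_cancel₀ _ (ne_of_gt ht1)] at this
  exact this
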